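/- arXiv:1805.02057 — 3 statements merged into one kernel-verified Lean document; each statement's English description precedes it below -/
import Mathlib

section
/- Let Δ be a crystallographic root system with positive roots Δ⁺ and simple roots Π. If γ ∈ Δ⁺ and α, β ∈ Π are such that γ − α and γ − β are both roots in Δ⁺, then either γ − α − β ∈ Δ⁺, or γ = α + β and α, β are adjacent in the Dynkin diagram (i.e., (α,β) ≠ 0). -/
open scoped RealInnerProductSpace Classical

/-- Combinatorial data of the set of positive roots of a (reduced, irreducible,
crystallographic) root system of a simple Lie algebra, with a chosen set of
simple roots, sitting in a real inner product space `V`. -/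
structure SimpleRS (V : Type*) [NormedAddCommGroup V] [InnerProductSpace ℝ V] where
  /-- the positive roots Δ⁺ -/
  pos : Finset V
  /-- the simple roots Π -/
  simple : Finset V
  simple_sub : simple ⊆ pos
  indep : LinearIndependent ℝ (fun α : {x // x ∈ simple} => (α : V))
  root_ne : ∀ γ ∈ pos, γ ≠ (0 : V)
  /-- `coeff γ α` is the coefficient of the simple root `α` in `γ` -/
  coeff : V → V → ℕ
  coeff_spec : ∀ γ ∈ pos, γ = ∑ α ∈ simple, (coeff γ α : ℝ) • α
  /-- the reflection of a root in a root is again a root (positive or negative) -/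
  reflect_mem : ∀ α ∈ pos, ∀ γ ∈ pos,
    (γ - (2 * ⟪γ, α⟫ / ⟪α, α⟫) • α ∈ pos ∨ -(γ - (2 * ⟪γ, α⟫ / ⟪α, α⟫) • α) ∈ pos)
  crystallographic : ∀ α ∈ pos, ∀ γ ∈ pos, ∃ z : ℤ, 2 * ⟪γ, α⟫ / ⟪α, α⟫ = (z : ℝ)
  reduced : ∀ α ∈ pos, (2 : ℝ) • α ∉ pos
  /-- irreducibility: the Dynkin diagram is connected -/
  irreducible : ∀ S ⊆ simple, (∀ α ∈ S, ∀ β ∈ simple, β ∉ S → ⟪α, β⟫ = 0) →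
      S = ∅ ∨ S = simple
  /-- the highest root θ -/
  highest : V
  highest_mem : highest ∈ pos
  highest_spec : ∀ γ ∈ pos, ∃ c : V → ℕ, highest - γ = ∑ α ∈ simple, (c α : ℝ) • α

namespace SimpleRS

variable {V : Type*} [NormedAddCommGroup V] [InnerProductSpace ℝ V] (R : SimpleRS V)

/-- the root order: `μ ≼ ν` iff `ν − μ` is a nonnegative integral combination
of simple roots -/
def rle (μ ν : V) : Prop := ∃ c : V → ℕ, ν - μ = ∑ α ∈ R.simple, (c α : ℝ) • α

/-- the support of a root: simple roots occurring with nonzero coefficient -/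
def supp (γ : V) : Set V := {α | α ∈ R.simple ∧ R.coeff γ α ≠ 0}

/-- the height of a root -/
def ht (γ : V) : ℕ := ∑ α ∈ R.simple, R.coeff γ α

/-- the root system is of type `A_n`: its Dynkin diagram is a simply laced chain -/
def IsTypeA : Prop :=
  ∃ (n : ℕ) (e : Fin n ≃ {x // x ∈ R.simple}),
    (∀ i j : Fin n, ⟪(e i : V), (e j : V)⟫ ≠ 0 ↔ ((i : ℤ) - (j : ℤ)).natAbs ≤ 1) ∧
    (∀ i j : Fin n, ‖(e i : V)‖ = ‖(e j : V)‖)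

/-- all roots have the same length -/
def SimplyLaced : Prop := ∀ α ∈ R.pos, ∀ β ∈ R.pos, ‖α‖ = ‖β‖

/-- a positive root `γ` is commutative if the upper ideal it generates is abelian,
i.e. no two of its elements sum to a root -/
def IsCom (γ : V) : Prop :=
  ∀ ν₁ ∈ R.pos, ∀ ν₂ ∈ R.pos, R.rle γ ν₁ → R.rle γ ν₂ →
    ν₁ + ν₂ ∉ R.pos ∧ -(ν₁ + ν₂) ∉ R.pos

/-- the coefficientwise floor `⌊θ/2⌋` of half the highest root -/
def floorTheta : V := ∑ α ∈ R.simple, ((R.coeff R.highest α / 2 : ℕ) : ℝ) • α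

lemma coeff_ext {f g : V → ℝ}
    (h : ∑ σ ∈ R.simple, f σ • σ = ∑ σ ∈ R.simple, g σ • σ) :
    ∀ σ ∈ R.simple, f σ = g σ := by
  have h0 : ∑ σ ∈ R.simple, (f σ - g σ) • σ = 0 := by
    simp only [sub_smul, Finset.sum_sub_distrib, h, sub_self]
  have h1 : ∑ i : {x // x ∈ R.simple}, (f i.1 - g i.1) • (i.1 : V) = 0 := by
    rw [Finset.univ_eq_attach, Finset.sum_attach R.simple (fun σ => (f σ - g σ) • σ)]
    exact h0
  have h2 := linearIndependent_iff'.mp R.indep Finset.univ (fun i => f i.1 - g i.1) h1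
  intro σ hσ
  have := h2 ⟨σ, hσ⟩ (Finset.mem_univ _)
  simpa [sub_eq_zero] using this

lemma repr_eq {v : V} (hv : v ∈ R.pos) {f : V → ℝ}
    (hf : v = ∑ σ ∈ R.simple, f σ • σ) :
    ∀ σ ∈ R.simple, f σ = (R.coeff v σ : ℝ) :=
  R.coeff_ext (hf.symm.trans (R.coeff_spec v hv))

lemma repr_nonneg {v : V} (hv : v ∈ R.pos) {f : V → ℝ}
    (hf : v = ∑ σ ∈ R.simple, f σ • σ) :
    ∀ σ ∈ R.simple, 0 ≤ f σ := by
  intro σ hσ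
  rw [R.repr_eq hv hf σ hσ]
  positivity

lemma ind_sum {α : V} (hα : α ∈ R.simple) :
    α = ∑ σ ∈ R.simple, (if σ = α then (1:ℝ) else 0) • σ := by
  simp [ite_smul, Finset.sum_ite_eq', hα]

lemma sub_not_mem {α β : V} (hα : α ∈ R.simple) (hβ : β ∈ R.simple) (hne : α ≠ β) :
    β - α ∉ R.pos := by
  intro h
  have hrep : β - α = ∑ σ ∈ R.simple,
      ((if σ = β then (1:ℝ) else 0) - (if σ = α then 1 else 0)) • σ := by
    simp [sub_smul, Finset.sum_sub_distrib, ite_smul, Finset.sum_ite_eq', hα, hβ]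
  have := R.repr_nonneg h hrep α hα
  simp [hne] at this
  linarith

lemma inner_self_pos' {v : V} (hv : v ∈ R.pos) : 0 < ⟪v, v⟫ :=
  lt_of_le_of_ne real_inner_self_nonneg
    (Ne.symm (inner_self_ne_zero.mpr (R.root_ne v hv)))

lemma key {x y : V} (hx : x ∈ R.pos) (hy : y ∈ R.pos) (hne : x ≠ y)
    (hpos : 0 < ⟪x, y⟫) : x - y ∈ R.pos ∨ -(x - y) ∈ R.pos := by
  obtain ⟨a, ha⟩ := R.crystallographic y hy x hx
  obtain ⟨b, hb⟩ := R.crystallographic x hx y hy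
  have hxx : 0 < ⟪x, x⟫ := R.inner_self_pos' hx
  have hyy : 0 < ⟪y, y⟫ := R.inner_self_pos' hy
  rw [real_inner_comm x y] at hb
  have ha' : 2 * ⟪x, y⟫ = (a:ℝ) * ⟪y, y⟫ := (div_eq_iff hyy.ne').mp ha
  have hb' : 2 * ⟪x, y⟫ = (b:ℝ) * ⟪x, x⟫ := (div_eq_iff hxx.ne').mp hb
  have hapos : (0:ℝ) < a := by nlinarith
  have hbpos : (0:ℝ) < b := by nlinarith
  have haz : 1 ≤ a := by exact_mod_cast hapos
  have hbz : 1 ≤ b := by exact_mod_cast hbpos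
  have hcs : ⟪x, y⟫ * ⟪x, y⟫ ≤ ⟪x, x⟫ * ⟪y, y⟫ := real_inner_mul_inner_self_le x y
  have hprod : (a:ℝ) * b * (⟪x, x⟫ * ⟪y, y⟫) = 4 * (⟪x, y⟫ * ⟪x, y⟫) := by
    linear_combination (-(b:ℝ) * ⟪x, x⟫) * ha' + (-2 * ⟪x, y⟫) * hb'
  have habR : (a:ℝ) * b ≤ 4 := by nlinarith [mul_pos hxx hyy]
  have habz : a * b ≤ 4 := by exact_mod_cast habR
  by_cases ha1 : a = 1
  · have := R.reflect_mem y hy x hx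
    rw [ha, ha1] at this
    simpa using this
  by_cases hb1 : b = 1
  · have := R.reflect_mem x hx y hy
    rw [real_inner_comm x y, hb, hb1] at this
    simp only [Int.cast_one, one_smul] at this
    rcases this with h | h
    · right; rwa [neg_sub]
    · left; rwa [neg_sub] at h
  · -- a ≥ 2, b ≥ 2, ab ≤ 4 ⇒ a = b = 2 ⇒ x = y, contradiction
    have ha2 : 2 ≤ a := by omega
    have hb2 : 2 ≤ b := by omega
    have haa : a = 2 := by nlinarith
    have hbb : b = 2 := by nlinarith
    exfalso
    apply hne
    rw [← sub_eq_zero, ← inner_self_eq_zero (𝕜 := ℝ)]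
    rw [haa] at ha'; rw [hbb] at hb'
    simp only [inner_sub_left, inner_sub_right]
    push_cast at ha' hb'
    linarith [real_inner_comm x y]

end SimpleRS

/-- if `γ − α` and `γ − β` are positive roots for distinct simple
roots `α, β`, then either `γ − α − β` is a positive root, or `γ = α + β` and
`α, β` are adjacent in the Dynkin diagram. -/
theorem stmt0 {V : Type*} [NormedAddCommGroup V] [InnerProductSpace ℝ V]
    (R : SimpleRS V) {γ α β : V} (hγ : γ ∈ R.pos)
    (hα : α ∈ R.simple) (hβ : β ∈ R.simple) (hαβ : α ≠ β)
    (h1 : γ - α ∈ R.pos) (h2 : γ - β ∈ R.pos) :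
    γ - α - β ∈ R.pos ∨ (γ = α + β ∧ ⟪α, β⟫ ≠ 0) := by
  classical
  have hαpos : α ∈ R.pos := R.simple_sub hα
  have hβpos : β ∈ R.pos := R.simple_sub hβ
  by_cases hsum : γ = α + β
  · refine Or.inr ⟨hsum, ?_⟩
    intro hab
    have hαα : 0 < ⟪α, α⟫ := R.inner_self_pos' hαpos
    have hγα : ⟪γ, α⟫ = ⟪α, α⟫ := by
      rw [hsum, inner_add_left, real_inner_comm α β, hab, add_zero]
    have hsc : 2 * ⟪γ, α⟫ / ⟪α, α⟫ = 2 := by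
      rw [hγα]; field_simp
    have href := R.reflect_mem α hαpos γ hγ
    rw [hsc] at href
    have heq : γ - (2:ℝ) • α = β - α := by
      rw [hsum, two_smul]; abel
    rw [heq] at href
    rcases href with h | h
    · exact R.sub_not_mem hα hβ hαβ h
    · rw [neg_sub] at h
      exact R.sub_not_mem hβ hα hαβ.symm h
  · left
    set c : V → ℝ := fun σ => (R.coeff γ σ : ℝ) with hc
    have hrepγ : γ = ∑ σ ∈ R.simple, c σ • σ := R.coeff_spec γ hγ
    have hrepA : γ - α = ∑ σ ∈ R.simple, (c σ - (if σ = α then (1:ℝ) else 0)) • σ := by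
      calc γ - α = (∑ σ ∈ R.simple, c σ • σ) -
          ∑ σ ∈ R.simple, (if σ = α then (1:ℝ) else 0) • σ := by
            rw [← hrepγ, ← R.ind_sum hα]
        _ = _ := by simp [sub_smul, Finset.sum_sub_distrib]
    have hrepB : γ - β = ∑ σ ∈ R.simple, (c σ - (if σ = β then (1:ℝ) else 0)) • σ := by
      calc γ - β = (∑ σ ∈ R.simple, c σ • σ) -
          ∑ σ ∈ R.simple, (if σ = β then (1:ℝ) else 0) • σ := by
            rw [← hrepγ, ← R.ind_sum hβ]
        _ = _ := by simp [sub_smul, Finset.sum_sub_distrib]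
    have hcα1 : 1 ≤ c α := by
      have := R.repr_nonneg h1 hrepA α hα
      simpa using this
    have hcβ1 : 1 ≤ c β := by
      have := R.repr_nonneg h2 hrepB β hβ
      simpa using this
    have hne_neg : -(γ - α - β) ∉ R.pos := by
      intro hmem
      have hrep : -(γ - α - β) = ∑ σ ∈ R.simple,
          ((if σ = α then (1:ℝ) else 0) + (if σ = β then 1 else 0) - c σ) • σ := by
        calc -(γ - α - β) =
            ((∑ σ ∈ R.simple, (if σ = α then (1:ℝ) else 0) • σ) +
              ∑ σ ∈ R.simple, (if σ = β then (1:ℝ) else 0) • σ) -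
              ∑ σ ∈ R.simple, c σ • σ := by
                rw [← hrepγ, ← R.ind_sum hα, ← R.ind_sum hβ]; abel
          _ = _ := by simp [add_smul, sub_smul, Finset.sum_add_distrib, Finset.sum_sub_distrib]
      have hnn := R.repr_nonneg hmem hrep
      apply hsum
      have hγeq : ∀ σ ∈ R.simple, c σ = (if σ = α then (1:ℝ) else 0) + (if σ = β then 1 else 0) := by
        intro σ hσ
        have hnnσ := hnn σ hσ
        have hnn0 : (0:ℝ) ≤ c σ := Nat.cast_nonneg _
        by_cases h : σ = α
        · subst h
          simp only [if_neg hαβ, eq_self_iff_true, if_true, add_zero] at hnnσ ⊢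
          linarith
        · by_cases h' : σ = β
          · subst h'
            simp only [if_neg h, eq_self_iff_true, if_true, zero_add] at hnnσ ⊢
            linarith
          · simp only [if_neg h, if_neg h'] at hnnσ ⊢
            linarith
      calc γ = ∑ σ ∈ R.simple, c σ • σ := hrepγ
        _ = ∑ σ ∈ R.simple,
            ((if σ = α then (1:ℝ) else 0) + (if σ = β then 1 else 0)) • σ :=
          Finset.sum_congr rfl (fun σ hσ => by rw [hγeq σ hσ])
        _ = α + β := by
          simp [add_smul, Finset.sum_add_distrib, ite_smul, Finset.sum_ite_eq', hα, hβ]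
    have hg_ne_a : γ - α ≠ β := by
      intro h
      exact hsum (by rw [sub_eq_iff_eq_add.mp h, add_comm])
    have hg_ne_b : γ - β ≠ α := by
      intro h
      exact hsum (sub_eq_iff_eq_add.mp h)
    have hab_le : ⟪α, β⟫ ≤ 0 := by
      by_contra h; push_neg at h
      rcases R.key hαpos hβpos hαβ h with h' | h'
      · exact R.sub_not_mem hβ hα hαβ.symm h'
      · rw [neg_sub] at h'; exact R.sub_not_mem hα hβ hαβ h'
    have hgg_le : ⟪γ - α, γ - β⟫ ≤ 0 := by
      by_contra h; push_neg at h
      have hne' : γ - α ≠ γ - β := by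
        intro hh
        apply hαβ
        have h0 : β - α = 0 := by
          have : γ - α - (γ - β) = 0 := by rw [hh, sub_self]
          calc β - α = γ - α - (γ - β) := by abel
            _ = 0 := this
        have := sub_eq_zero.mp h0
        exact this.symm
      rcases R.key h1 h2 hne' h with h' | h'
      · have he : γ - α - (γ - β) = β - α := by abel
        rw [he] at h'; exact R.sub_not_mem hα hβ hαβ h'
      · have he : -(γ - α - (γ - β)) = α - β := by abel
        rw [he] at h'; exact R.sub_not_mem hβ hα hαβ.symm h'
    have hγγ : 0 < ⟪γ, γ⟫ := R.inner_self_pos' hγ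
    have hmain : 0 < ⟪γ - α, β⟫ ∨ 0 < ⟪γ - β, α⟫ := by
      by_contra h; push_neg at h
      obtain ⟨hA', hB'⟩ := h
      have hexp : ⟪γ, γ⟫ = ⟪γ - α, γ - β⟫ + ⟪γ - α, β⟫ + ⟪α, γ - β⟫ + ⟪α, β⟫ := by
        simp only [inner_sub_left, inner_sub_right]; ring
      have hcomm : ⟪α, γ - β⟫ = ⟪γ - β, α⟫ := real_inner_comm (γ - β) α
      linarith
    rcases hmain with h | h
    · rcases R.key h1 hβpos hg_ne_a h with h' | h'
      · exact h'
      · exact absurd h' hne_neg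
    · rcases R.key h2 hαpos hg_ne_b h with h' | h'
      · have he : γ - β - α = γ - α - β := by abel
        rwa [he] at h'
      · have he : -(γ - β - α) = -(γ - α - β) := by abel
        rw [he] at h'; exact absurd h' hne_neg
end

section
/- Let Δ⁺ be the set of positive roots of a simple root system with simple roots Π. If γ ∈ Δ⁺ and α, β ∈ Π are distinct simple roots such that γ + α and γ + β are both positive roots, then γ + α + β is also a positive root. -/
open scoped RealInnerProductSpace

section AuxStmt1

variable {V : Type*} [NormedAddCommGroup V] [InnerProductSpace ℝ V] (R : SimpleRS V)

private lemma aux_ipos {x : V} (hx : x ≠ 0) : (0:ℝ) < ⟪x, x⟫ := by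
  rcases lt_or_eq_of_le (real_inner_self_nonneg (x := x)) with h | h
  · exact h
  · exact absurd (inner_self_eq_zero.mp h.symm) hx

private lemma aux_sumz (f : V → ℝ) (h : ∑ a ∈ R.simple, f a • a = 0) :
    ∀ a ∈ R.simple, f a = 0 := by
  have hi := Fintype.linearIndependent_iff.mp R.indep (fun i => f i)
  have h2 : ∑ i : {x // x ∈ R.simple}, f i • (i : V) = 0 := by
    rw [Finset.sum_coe_sort R.simple (fun a => f a • a)]; exact h
  intro a ha
  exact hi h2 ⟨a, ha⟩

private lemma aux_sz2 {x y : V} (hx : x ∈ R.pos) (hy : y ∈ R.pos) (h : x + y = 0) : False := by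
  have ex := R.coeff_spec x hx
  have ey := R.coeff_spec y hy
  have hsum : ∑ a ∈ R.simple, ((R.coeff x a : ℝ) + (R.coeff y a : ℝ)) • a = 0 := by
    simp only [add_smul, Finset.sum_add_distrib, ← ex, ← ey]; exact h
  have h0 := aux_sumz R _ hsum
  apply R.root_ne x hx
  rw [ex]
  apply Finset.sum_eq_zero
  intro a ha
  have h1 : (R.coeff x a : ℝ) = 0 := by
    have h2 := h0 a ha
    have := Nat.cast_nonneg (α := ℝ) (R.coeff x a)
    have := Nat.cast_nonneg (α := ℝ) (R.coeff y a)
    linarith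
  rw [h1, zero_smul]

private lemma aux_sz3 {x y z : V} (hx : x ∈ R.pos) (hy : y ∈ R.pos) (hz : z ∈ R.pos)
    (h : x + y + z = 0) : False := by
  have ex := R.coeff_spec x hx
  have ey := R.coeff_spec y hy
  have ez := R.coeff_spec z hz
  have hsum : ∑ a ∈ R.simple,
      ((R.coeff x a : ℝ) + (R.coeff y a : ℝ) + (R.coeff z a : ℝ)) • a = 0 := by
    simp only [add_smul, Finset.sum_add_distrib, ← ex, ← ey, ← ez]; exact h
  have h0 := aux_sumz R _ hsum
  apply R.root_ne x hx
  rw [ex]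
  apply Finset.sum_eq_zero
  intro a ha
  have h1 : (R.coeff x a : ℝ) = 0 := by
    have h2 := h0 a ha
    have := Nat.cast_nonneg (α := ℝ) (R.coeff x a)
    have := Nat.cast_nonneg (α := ℝ) (R.coeff y a)
    have := Nat.cast_nonneg (α := ℝ) (R.coeff z a)
    linarith
  rw [h1, zero_smul]

private lemma aux_neg_inner {μ δ : V} (hμ : μ ∈ R.pos) (hδ : δ ∈ R.pos)
    (h : ⟪μ, δ⟫ < 0) : μ + δ ∈ R.pos := by
  obtain ⟨m, hm⟩ := R.crystallographic δ hδ μ hμ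
  obtain ⟨n, hn⟩ := R.crystallographic μ hμ δ hδ
  have hμ0 : (0:ℝ) < ⟪μ, μ⟫ := aux_ipos (R.root_ne μ hμ)
  have hδ0 : (0:ℝ) < ⟪δ, δ⟫ := aux_ipos (R.root_ne δ hδ)
  have hdm : ⟪δ, μ⟫ = ⟪μ, δ⟫ := real_inner_comm μ δ
  have hm' : 2 * ⟪μ, δ⟫ = (m:ℝ) * ⟪δ, δ⟫ := by
    have h' := hm
    rw [div_eq_iff hδ0.ne'] at h'
    linarith
  have hn' : 2 * ⟪μ, δ⟫ = (n:ℝ) * ⟪μ, μ⟫ := by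
    have h' := hn
    rw [div_eq_iff hμ0.ne'] at h'
    rw [← hdm]
    linarith
  have hmneg : m < 0 := by
    have : (m:ℝ) < 0 := by nlinarith
    exact_mod_cast this
  have hnneg : n < 0 := by
    have : (n:ℝ) < 0 := by nlinarith
    exact_mod_cast this
  have hcs := real_inner_mul_inner_self_le μ δ
  have hprod : ((m:ℝ) * ⟪δ, δ⟫) * ((n:ℝ) * ⟪μ, μ⟫) = (2 * ⟪μ, δ⟫) * (2 * ⟪μ, δ⟫) := by
    rw [← hm', ← hn']
  have hmn4 : m * n ≤ 4 := by
    have : (m:ℝ) * n ≤ 4 := by nlinarith [mul_pos hδ0 hμ0]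
    exact_mod_cast this
  by_cases hm1 : m = -1
  · have hco : 2 * ⟪μ, δ⟫ / ⟪δ, δ⟫ = (-1 : ℝ) := by rw [hm, hm1]; norm_num
    rcases R.reflect_mem δ hδ μ hμ with hr | hr
    · rw [hco] at hr
      have he : μ - (-1:ℝ) • δ = μ + δ := by module
      rwa [he] at hr
    · exfalso
      rw [hco] at hr
      refine aux_sz3 R hμ hδ hr ?_
      module
  by_cases hn1 : n = -1
  · have hco : 2 * ⟪δ, μ⟫ / ⟪μ, μ⟫ = (-1 : ℝ) := by rw [hn, hn1]; norm_num
    rcases R.reflect_mem μ hμ δ hδ with hr | hr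
    · rw [hco] at hr
      have he : δ - (-1:ℝ) • μ = μ + δ := by module
      rwa [he] at hr
    · exfalso
      rw [hco] at hr
      refine aux_sz3 R hμ hδ hr ?_
      rw [add_comm μ δ]
      module
  · exfalso
    have hm2 : m ≤ -2 := by omega
    have hn2 : n ≤ -2 := by omega
    have hmeq : m = -2 := by nlinarith
    have hneq : n = -2 := by nlinarith
    have h1 : ⟪μ, δ⟫ = -⟪δ, δ⟫ := by rw [hmeq] at hm'; push_cast at hm'; linarith
    have h2 : ⟪μ, δ⟫ = -⟪μ, μ⟫ := by rw [hneq] at hn'; push_cast at hn'; linarith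
    have hz : ⟪μ + δ, μ + δ⟫ = 0 := by
      rw [real_inner_add_add_self]
      linarith
    exact aux_sz2 R hμ hδ (inner_self_eq_zero.mp hz)

private lemma aux_pos_inner {μ δ : V} (hμ : μ ∈ R.pos) (hδ : δ ∈ R.pos) (hne : μ ≠ δ)
    (h : 0 < ⟪μ, δ⟫) : μ - δ ∈ R.pos ∨ δ - μ ∈ R.pos := by
  obtain ⟨m, hm⟩ := R.crystallographic δ hδ μ hμ
  obtain ⟨n, hn⟩ := R.crystallographic μ hμ δ hδ
  have hμ0 : (0:ℝ) < ⟪μ, μ⟫ := aux_ipos (R.root_ne μ hμ)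
  have hδ0 : (0:ℝ) < ⟪δ, δ⟫ := aux_ipos (R.root_ne δ hδ)
  have hdm : ⟪δ, μ⟫ = ⟪μ, δ⟫ := real_inner_comm μ δ
  have hm' : 2 * ⟪μ, δ⟫ = (m:ℝ) * ⟪δ, δ⟫ := by
    have h' := hm
    rw [div_eq_iff hδ0.ne'] at h'
    linarith
  have hn' : 2 * ⟪μ, δ⟫ = (n:ℝ) * ⟪μ, μ⟫ := by
    have h' := hn
    rw [div_eq_iff hμ0.ne'] at h'
    rw [← hdm]
    linarith
  have hmpos : 0 < m := by
    have : (0:ℝ) < (m:ℝ) := by nlinarith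
    exact_mod_cast this
  have hnpos : 0 < n := by
    have : (0:ℝ) < (n:ℝ) := by nlinarith
    exact_mod_cast this
  have hcs := real_inner_mul_inner_self_le μ δ
  have hprod : ((m:ℝ) * ⟪δ, δ⟫) * ((n:ℝ) * ⟪μ, μ⟫) = (2 * ⟪μ, δ⟫) * (2 * ⟪μ, δ⟫) := by
    rw [← hm', ← hn']
  have hmn4 : m * n ≤ 4 := by
    have : (m:ℝ) * n ≤ 4 := by nlinarith [mul_pos hδ0 hμ0]
    exact_mod_cast this
  by_cases hm1 : m = 1
  · have hco : 2 * ⟪μ, δ⟫ / ⟪δ, δ⟫ = (1 : ℝ) := by rw [hm, hm1]; norm_num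
    rcases R.reflect_mem δ hδ μ hμ with hr | hr
    · rw [hco] at hr
      rw [one_smul] at hr
      exact Or.inl hr
    · rw [hco] at hr
      rw [one_smul, neg_sub] at hr
      exact Or.inr hr
  by_cases hn1 : n = 1
  · have hco : 2 * ⟪δ, μ⟫ / ⟪μ, μ⟫ = (1 : ℝ) := by rw [hn, hn1]; norm_num
    rcases R.reflect_mem μ hμ δ hδ with hr | hr
    · rw [hco] at hr
      rw [one_smul] at hr
      exact Or.inr hr
    · rw [hco] at hr
      rw [one_smul, neg_sub] at hr
      exact Or.inl hr
  · exfalso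
    have hm2 : 2 ≤ m := by omega
    have hn2 : 2 ≤ n := by omega
    have hmeq : m = 2 := by nlinarith
    have hneq : n = 2 := by nlinarith
    have h1 : ⟪μ, δ⟫ = ⟪δ, δ⟫ := by rw [hmeq] at hm'; push_cast at hm'; linarith
    have h2 : ⟪μ, δ⟫ = ⟪μ, μ⟫ := by rw [hneq] at hn'; push_cast at hn'; linarith
    have hz : ⟪μ - δ, μ - δ⟫ = 0 := by
      rw [real_inner_sub_sub_self]
      linarith
    exact hne (sub_eq_zero.mp (inner_self_eq_zero.mp hz))

private lemma aux_simple_diff {α β : V} (hα : α ∈ R.simple) (hβ : β ∈ R.simple)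
    (hne : α ≠ β) : α - β ∉ R.pos := by
  classical
  intro hmem
  have hc := R.coeff_spec (α - β) hmem
  set f : V → ℝ := fun a =>
    (if a = α then (1:ℝ) else 0) - (if a = β then (1:ℝ) else 0) - (R.coeff (α - β) a : ℝ)
    with hf
  have hsum : ∑ a ∈ R.simple, f a • a = 0 := by
    simp only [hf, sub_smul, Finset.sum_sub_distrib, ite_smul, one_smul, zero_smul,
      Finset.sum_ite_eq', hα, hβ, if_pos]
    rw [← hc]
    abel
  have h0 := aux_sumz R f hsum β hβ
  rw [hf] at h0
  simp only [if_neg (Ne.symm hne), if_pos rfl] at h0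
  norm_num at h0
  have := Nat.cast_nonneg (α := ℝ) (R.coeff (α - β) β)
  linarith

private theorem aux_stmt1 {γ α β : V} (hγ : γ ∈ R.pos)
    (hα : α ∈ R.simple) (hβ : β ∈ R.simple) (hαβ : α ≠ β)
    (h1 : γ + α ∈ R.pos) (h2 : γ + β ∈ R.pos) :
    γ + α + β ∈ R.pos := by
  have hαp := R.simple_sub hα
  have hβp := R.simple_sub hβ
  -- distinct simple roots have nonpositive inner product
  have hab : ⟪α, β⟫ ≤ 0 := by
    by_contra hc
    push_neg at hc
    rcases aux_pos_inner R hαp hβp (by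
      intro h; exact hαβ h) hc with hd | hd
    · exact aux_simple_diff R hα hβ hαβ hd
    · exact aux_simple_diff R hβ hα (Ne.symm hαβ) hd
  by_cases hA : ⟪γ + α, β⟫ < 0
  · exact aux_neg_inner R h1 hβp hA
  by_cases hB : ⟪γ + β, α⟫ < 0
  · have := aux_neg_inner R h2 hαp hB
    rwa [show γ + β + α = γ + α + β by abel] at this
  · exfalso
    push_neg at hA hB
    have hγ0 : (0:ℝ) < ⟪γ, γ⟫ := aux_ipos (R.root_ne γ hγ)
    rw [inner_add_left] at hA hB
    have hba : ⟪β, α⟫ = ⟪α, β⟫ := real_inner_comm α β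
    have hib : (0:ℝ) < ⟪γ + α, γ + β⟫ := by
      rw [inner_add_left, inner_add_right, inner_add_right]
      have hαγ : ⟪α, γ⟫ = ⟪γ, α⟫ := real_inner_comm γ α
      linarith
    have hne : γ + α ≠ γ + β := fun h => hαβ (by
      have := add_left_cancel h; exact this)
    rcases aux_pos_inner R h1 h2 hne hib with hd | hd
    · rw [show γ + α - (γ + β) = α - β by abel] at hd
      exact aux_simple_diff R hα hβ hαβ hd
    · rw [show γ + β - (γ + α) = β - α by abel] at hd
      exact aux_simple_diff R hβ hα (Ne.symm hαβ) hd

end AuxStmt1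

/-- if `γ + α` and `γ + β` are positive roots for distinct simple
roots `α, β`, then so is `γ + α + β`. -/
theorem stmt1 {V : Type*} [NormedAddCommGroup V] [InnerProductSpace ℝ V]
    (R : SimpleRS V) {γ α β : V} (hγ : γ ∈ R.pos)
    (hα : α ∈ R.simple) (hβ : β ∈ R.simple) (hαβ : α ≠ β)
    (h1 : γ + α ∈ R.pos) (h2 : γ + β ∈ R.pos) :
    γ + α + β ∈ R.pos :=
  aux_stmt1 R hγ hα hβ hαβ h1 h2
end

section
/- Equip the positive roots Δ⁺ of a simple root system with the partial order μ ≼ ν iff ν − μ is a nonnegative integral combination of simple roots. For γ₁, γ₂ ∈ Δ⁺, the greatest lower bound γ₁ ∧ γ₂ exists in (Δ⁺, ≼) if and only if supp(γ₁) ∩ supp(γ₂) ≠ ∅, where supp(γ) is the set of simple roots occurring with nonzero coefficient in γ. -/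
open scoped RealInnerProductSpace

namespace StmtAux

variable {V : Type*} [NormedAddCommGroup V] [InnerProductSpace ℝ V] [DecidableEq V] (R : SimpleRS V)

lemma sum_eq {f g : V → ℝ}
    (h : ∑ α ∈ R.simple, f α • α = ∑ α ∈ R.simple, g α • α) :
    ∀ α ∈ R.simple, f α = g α := by
  intro α hα
  have h0 : ∑ β ∈ R.simple, (f β - g β) • β = 0 := by
    simp only [sub_smul, Finset.sum_sub_distrib, h, sub_self]
  have h1 : ∑ i : {x // x ∈ R.simple}, (f i - g i) • (i : V) = 0 := by
    rw [Finset.univ_eq_attach, Finset.sum_attach R.simple (fun x => (f x - g x) • x)]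
    exact h0
  have h2 := linearIndependent_iff'.mp R.indep Finset.univ
    (fun i => f i - g i) h1 ⟨α, hα⟩ (Finset.mem_univ _)
  have : f α - g α = 0 := h2
  linarith

lemma coeff_eq {γ : V} (hγ : γ ∈ R.pos) (f : V → ℕ)
    (h : γ = ∑ α ∈ R.simple, (f α : ℝ) • α) :
    ∀ α ∈ R.simple, R.coeff γ α = f α := by
  intro α hα
  have := sum_eq R (f := fun α => (R.coeff γ α : ℝ)) (g := fun α => (f α : ℝ))
    (by rw [← R.coeff_spec γ hγ, ← h]) α hα
  exact_mod_cast this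

lemma exists_supp {γ : V} (hγ : γ ∈ R.pos) : ∃ α ∈ R.simple, R.coeff γ α ≠ 0 := by
  by_contra h
  push_neg at h
  refine R.root_ne γ hγ ?_
  rw [R.coeff_spec γ hγ]
  apply Finset.sum_eq_zero
  intro α hα
  simp [h α hα]

lemma coeff_add {x y z : V} (hx : x ∈ R.pos) (hy : y ∈ R.pos) (hz : z ∈ R.pos)
    (h : x + y = z) : ∀ α ∈ R.simple, R.coeff x α + R.coeff y α = R.coeff z α := by
  intro α hα
  have h2 : ∑ β ∈ R.simple, ((R.coeff x β : ℝ) + (R.coeff y β : ℝ)) • β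
      = ∑ β ∈ R.simple, (R.coeff z β : ℝ) • β := by
    simp only [add_smul, Finset.sum_add_distrib]
    rw [← R.coeff_spec x hx, ← R.coeff_spec y hy, ← R.coeff_spec z hz, h]
  have := sum_eq R h2 α hα
  exact_mod_cast this

lemma coeff_simple {α : V} (hα : α ∈ R.simple) :
    ∀ β ∈ R.simple, R.coeff α β = if β = α then 1 else 0 := by
  apply coeff_eq R (R.simple_sub hα)
  have : ∑ β ∈ R.simple, (((if β = α then 1 else 0 : ℕ)) : ℝ) • β = α := by
    simp only [Nat.cast_ite, Nat.cast_one, Nat.cast_zero, ite_smul, one_smul, zero_smul]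
    rw [Finset.sum_ite_eq' R.simple α (fun β => β)]
    simp [hα]
  exact this.symm

lemma sum3_ne_zero {x y z : V} (hx : x ∈ R.pos) (hy : y ∈ R.pos) (hz : z ∈ R.pos) :
    x + y + z ≠ 0 := by
  intro h
  have h2 : ∑ β ∈ R.simple,
      ((R.coeff x β : ℝ) + (R.coeff y β : ℝ) + (R.coeff z β : ℝ)) • β
      = ∑ β ∈ R.simple, (0 : ℝ) • β := by
    simp only [add_smul, Finset.sum_add_distrib]
    rw [← R.coeff_spec x hx, ← R.coeff_spec y hy, ← R.coeff_spec z hz, h]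
    simp
  obtain ⟨α, hα, hne⟩ := exists_supp R hx
  have h3 := sum_eq R h2 α hα
  have hx0 : (R.coeff x α : ℝ) = 0 := by
    have n1 : (0:ℝ) ≤ (R.coeff x α : ℝ) := Nat.cast_nonneg _
    have n2 : (0:ℝ) ≤ (R.coeff y α : ℝ) := Nat.cast_nonneg _
    have n3 : (0:ℝ) ≤ (R.coeff z α : ℝ) := Nat.cast_nonneg _
    linarith
  exact hne (by exact_mod_cast hx0)

end StmtAux

namespace StmtAux

variable {V : Type*} [NormedAddCommGroup V] [InnerProductSpace ℝ V] [DecidableEq V] (R : SimpleRS V)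

lemma inner_self_pos' {γ : V} (hγ : γ ∈ R.pos) : 0 < ⟪γ, γ⟫ := by
  rw [real_inner_self_eq_norm_mul_norm]
  have : γ ≠ 0 := R.root_ne γ hγ
  have h0 : 0 < ‖γ‖ := norm_pos_iff.mpr this
  positivity

/-- if two positive roots have positive inner product, their difference
(one way or the other) is a positive root, unless they are equal -/
lemma sub_mem_of_inner_pos {γ δ : V} (hγ : γ ∈ R.pos) (hδ : δ ∈ R.pos) (hne : γ ≠ δ)
    (hip : 0 < ⟪γ, δ⟫) : γ - δ ∈ R.pos ∨ δ - γ ∈ R.pos := by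
  obtain ⟨z₁, hz₁⟩ := R.crystallographic δ hδ γ hγ
  obtain ⟨z₂, hz₂⟩ := R.crystallographic γ hγ δ hδ
  have ha : 0 < ⟪δ, δ⟫ := inner_self_pos' R hδ
  have hb : 0 < ⟪γ, γ⟫ := inner_self_pos' R hγ
  have hdg : ⟪δ, γ⟫ = ⟪γ, δ⟫ := real_inner_comm γ δ
  have hz₁' : (z₁ : ℝ) * ⟪δ, δ⟫ = 2 * ⟪γ, δ⟫ := by
    field_simp at hz₁; linarith [hz₁]
  have hz₂' : (z₂ : ℝ) * ⟪γ, γ⟫ = 2 * ⟪γ, δ⟫ := by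
    rw [hdg] at hz₂; field_simp at hz₂; linarith [hz₂]
  have hz₁pos : 0 < z₁ := by
    have : 0 < (z₁ : ℝ) := by nlinarith
    exact_mod_cast this
  have hz₂pos : 0 < z₂ := by
    have : 0 < (z₂ : ℝ) := by nlinarith
    exact_mod_cast this
  rcases lt_or_eq_of_le (abs_real_inner_le_norm γ δ) with hlt | heq
  · -- strict Cauchy–Schwarz
    have hsq : ⟪γ, δ⟫ * ⟪γ, δ⟫ < ⟪γ, γ⟫ * ⟪δ, δ⟫ := by
      have h1 : |⟪γ, δ⟫| = ⟪γ, δ⟫ := abs_of_pos hip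
      have h2 : ⟪γ, γ⟫ = ‖γ‖ * ‖γ‖ := real_inner_self_eq_norm_mul_norm γ
      have h3 : ⟪δ, δ⟫ = ‖δ‖ * ‖δ‖ := real_inner_self_eq_norm_mul_norm δ
      rw [h1] at hlt
      nlinarith [norm_nonneg γ, norm_nonneg δ]
    have hprod : z₁ * z₂ < 4 := by
      have : (z₁ : ℝ) * z₂ < 4 := by nlinarith
      exact_mod_cast this
    have hone : z₁ = 1 ∨ z₂ = 1 := by
      by_contra hcon
      push_neg at hcon
      have e1 : 2 ≤ z₁ := by omega
      have e2 : 2 ≤ z₂ := by omega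
      nlinarith
    rcases hone with he | he
    · have hrefl := R.reflect_mem δ hδ γ hγ
      rw [hz₁, he] at hrefl
      simp only [Int.cast_one, one_smul] at hrefl
      rcases hrefl with hm | hm
      · exact Or.inl hm
      · right; rwa [neg_sub] at hm
    · have hrefl := R.reflect_mem γ hγ δ hδ
      rw [hz₂, he] at hrefl
      simp only [Int.cast_one, one_smul] at hrefl
      rcases hrefl with hm | hm
      · exact Or.inr hm
      · left; rwa [neg_sub] at hm
  · -- equality in Cauchy–Schwarz: proportional roots, contradiction
    exfalso
    have heq' : ⟪γ, δ⟫ = ‖γ‖ * ‖δ‖ := by rwa [abs_of_pos hip] at heq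
    have hprop := inner_eq_norm_mul_iff_real.mp heq'
    -- ‖δ‖ • γ = ‖γ‖ • δ
    have hγ0 : ‖γ‖ ≠ 0 := by
      have := R.root_ne γ hγ; simpa [norm_eq_zero] using this
    set r : ℝ := ‖δ‖ / ‖γ‖ with hrdef
    have hrpos : 0 < r := by
      have h0 : 0 < ‖γ‖ := norm_pos_iff.mpr (R.root_ne γ hγ)
      have h1 : 0 < ‖δ‖ := norm_pos_iff.mpr (R.root_ne δ hδ)
      positivity
    have hδr : δ = r • γ := by
      have := congrArg (fun x => (‖γ‖)⁻¹ • x) hprop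
      simp only [smul_smul] at this
      rw [inv_mul_cancel₀ hγ0, one_smul] at this
      rw [← this, hrdef, div_eq_inv_mul, mul_comm]
    have hdgr : ⟪δ, γ⟫ = r * ⟪γ, γ⟫ := by rw [hδr, real_inner_smul_left]
    have hddr : ⟪δ, δ⟫ = r * r * ⟪γ, γ⟫ := by
      rw [hδr, real_inner_smul_left, real_inner_smul_right]; ring
    -- z₂ = 2r, z₁ = 2/r
    have hb' : ⟪γ,γ⟫ ≠ 0 := ne_of_gt hb
    have hgd' : ⟪γ, δ⟫ = r * ⟪γ,γ⟫ := by rw [← hdg, hdgr]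
    have hz₂r : (z₂ : ℝ) = 2 * r := by
      apply mul_right_cancel₀ hb'
      rw [hz₂', hgd']; ring
    have hz₁z₂ : z₁ * z₂ = 4 := by
      have hr0 : r ≠ 0 := ne_of_gt hrpos
      have : (z₁ : ℝ) * z₂ = 4 := by
        have e1 : (z₁ : ℝ) * r = 2 := by
          apply mul_right_cancel₀ (b := r * ⟪γ,γ⟫) (by positivity)
          have : (z₁ : ℝ) * (r * r * ⟪γ,γ⟫) = 2 * (r * ⟪γ,γ⟫) := by
            rw [← hddr, hz₁', hgd']
          nlinarith [this]
        nlinarith [hz₂r]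
      exact_mod_cast this
    have hz₂b : z₂ ≤ 4 := by nlinarith
    interval_cases z₂
    · -- z₂ = 1 : r = 1/2, γ = 2δ
      have hr : r = 1/2 := by rw [Int.cast_one] at hz₂r; linarith
      have : γ = (2:ℝ) • δ := by
        rw [hδr, hr, smul_smul]; norm_num
      exact R.reduced δ hδ (this ▸ hγ)
    · -- z₂ = 2 : r = 1, γ = δ
      have hr : r = 1 := by
        rw [show ((2:ℤ):ℝ) = 2 by norm_num] at hz₂r; linarith
      exact hne (by rw [hδr, hr, one_smul])
    · omega
    · -- z₂ = 4 : r = 2, δ = 2γ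
      have hr : r = 2 := by
        rw [show ((4:ℤ):ℝ) = 4 by norm_num] at hz₂r; linarith
      refine R.reduced γ hγ ?_
      rw [← hr, ← hδr]; exact hδ

end StmtAux

namespace StmtAux

variable {V : Type*} [NormedAddCommGroup V] [InnerProductSpace ℝ V] [DecidableEq V] (R : SimpleRS V)

/-- if two positive roots have negative inner product, their sum is a positive root -/
lemma add_mem_of_inner_neg {γ δ : V} (hγ : γ ∈ R.pos) (hδ : δ ∈ R.pos)
    (hip : ⟪γ, δ⟫ < 0) : γ + δ ∈ R.pos := by
  obtain ⟨z₁, hz₁⟩ := R.crystallographic δ hδ γ hγ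
  obtain ⟨z₂, hz₂⟩ := R.crystallographic γ hγ δ hδ
  have ha : 0 < ⟪δ, δ⟫ := inner_self_pos' R hδ
  have hb : 0 < ⟪γ, γ⟫ := inner_self_pos' R hγ
  have hdg : ⟪δ, γ⟫ = ⟪γ, δ⟫ := real_inner_comm γ δ
  have hz₁' : (z₁ : ℝ) * ⟪δ, δ⟫ = 2 * ⟪γ, δ⟫ := by
    field_simp at hz₁; linarith [hz₁]
  have hz₂' : (z₂ : ℝ) * ⟪γ, γ⟫ = 2 * ⟪γ, δ⟫ := by
    rw [hdg] at hz₂; field_simp at hz₂; linarith [hz₂]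
  have hz₁neg : z₁ < 0 := by
    have : (z₁ : ℝ) < 0 := by nlinarith
    exact_mod_cast this
  have hz₂neg : z₂ < 0 := by
    have : (z₂ : ℝ) < 0 := by nlinarith
    exact_mod_cast this
  have hnegmem : ∀ x : V, x = γ + δ → -x ∈ R.pos → γ + δ ∈ R.pos := by
    intro x hx hmem
    exfalso
    exact sum3_ne_zero R hmem hγ hδ (by rw [hx]; abel)
  rcases lt_or_eq_of_le (abs_real_inner_le_norm γ δ) with hlt | heq
  · have hsq : ⟪γ, δ⟫ * ⟪γ, δ⟫ < ⟪γ, γ⟫ * ⟪δ, δ⟫ := by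
      have h1 : |⟪γ, δ⟫| = -⟪γ, δ⟫ := abs_of_neg hip
      have h2 : ⟪γ, γ⟫ = ‖γ‖ * ‖γ‖ := real_inner_self_eq_norm_mul_norm γ
      have h3 : ⟪δ, δ⟫ = ‖δ‖ * ‖δ‖ := real_inner_self_eq_norm_mul_norm δ
      rw [h1] at hlt
      nlinarith [norm_nonneg γ, norm_nonneg δ]
    have hprod : z₁ * z₂ < 4 := by
      have : (z₁ : ℝ) * z₂ < 4 := by nlinarith
      exact_mod_cast this
    have hone : z₁ = -1 ∨ z₂ = -1 := by
      by_contra hcon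
      push_neg at hcon
      have e1 : z₁ ≤ -2 := by omega
      have e2 : z₂ ≤ -2 := by omega
      nlinarith
    rcases hone with he | he
    · have hrefl := R.reflect_mem δ hδ γ hγ
      rw [hz₁, he] at hrefl
      simp only [Int.cast_neg, Int.cast_one, neg_smul, one_smul, sub_neg_eq_add] at hrefl
      rcases hrefl with hm | hm
      · exact hm
      · exact hnegmem _ rfl hm
    · have hrefl := R.reflect_mem γ hγ δ hδ
      rw [hz₂, he] at hrefl
      simp only [Int.cast_neg, Int.cast_one, neg_smul, one_smul, sub_neg_eq_add] at hrefl
      rw [add_comm δ γ] at hrefl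
      rcases hrefl with hm | hm
      · exact hm
      · exact hnegmem _ rfl hm
  · -- equality case: δ = r • γ with r < 0, impossible for positive roots
    exfalso
    have heq' : ⟪γ, -δ⟫ = ‖γ‖ * ‖-δ‖ := by
      rw [inner_neg_right, norm_neg]
      rw [abs_of_neg hip] at heq
      linarith
    have hprop := inner_eq_norm_mul_iff_real.mp heq'
    -- ‖-δ‖ • γ = ‖γ‖ • (-δ)
    have hγ0 : ‖γ‖ ≠ 0 := by
      have := R.root_ne γ hγ; simpa [norm_eq_zero] using this
    have hδr : δ = (-(‖δ‖ / ‖γ‖)) • γ := by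
      rw [norm_neg] at hprop
      have := congrArg (fun x => (‖γ‖)⁻¹ • x) hprop
      simp only [smul_smul] at this
      rw [inv_mul_cancel₀ hγ0, one_smul] at this
      have : -δ = (‖γ‖⁻¹ * ‖δ‖) • γ := this.symm
      have h2 := congrArg Neg.neg this
      simp only [neg_neg] at h2
      conv_lhs => rw [h2]
      rw [← neg_smul, div_eq_inv_mul]
    set r : ℝ := -(‖δ‖ / ‖γ‖) with hrdef
    have hrneg : r < 0 := by
      have h0 : 0 < ‖γ‖ := norm_pos_iff.mpr (R.root_ne γ hγ)
      have h1 : 0 < ‖δ‖ := norm_pos_iff.mpr (R.root_ne δ hδ)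
      rw [hrdef]
      have : 0 < ‖δ‖ / ‖γ‖ := by positivity
      linarith
    -- coefficients of δ would be negative
    obtain ⟨α, hα, hne⟩ := exists_supp R hγ
    have hrep : δ = ∑ β ∈ R.simple, (r * (R.coeff γ β : ℝ)) • β := by
      rw [hδr]
      conv_lhs => rw [R.coeff_spec γ hγ]
      rw [Finset.smul_sum]
      exact Finset.sum_congr rfl fun β _ => by rw [smul_smul]
    have := sum_eq R (f := fun β => (R.coeff δ β : ℝ)) (g := fun β => r * (R.coeff γ β : ℝ))
      (by rw [← R.coeff_spec δ hδ, ← hrep]) α hα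
    have h1 : (0:ℝ) ≤ (R.coeff δ α : ℝ) := Nat.cast_nonneg _
    have h2 : 0 < (R.coeff γ α : ℝ) := by
      have : 0 < R.coeff γ α := Nat.pos_of_ne_zero hne
      exact_mod_cast this
    nlinarith

/-- distinct simple roots have nonpositive inner product -/
lemma inner_simple_nonpos {α β : V} (hα : α ∈ R.simple) (hβ : β ∈ R.simple)
    (hne : α ≠ β) : ⟪α, β⟫ ≤ 0 := by
  by_contra hcon
  push_neg at hcon
  have hαp := R.simple_sub hα
  have hβp := R.simple_sub hβ
  rcases sub_mem_of_inner_pos R hαp hβp hne hcon with hm | hm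
  · have h1 := coeff_add R hm hβp hαp (by abel) β hβ
    rw [coeff_simple R hβ β hβ, coeff_simple R hα β hβ] at h1
    simp [Ne.symm hne] at h1
  · have h1 := coeff_add R hm hαp hβp (by abel) α hα
    rw [coeff_simple R hα α hα, coeff_simple R hβ α hα] at h1
    simp [hne] at h1

end StmtAux

namespace StmtAux

variable {V : Type*} [NormedAddCommGroup V] [InnerProductSpace ℝ V] [DecidableEq V] (R : SimpleRS V)

/-- hypotheses carried through the induction -/
def Hyp (γ₁ γ₂ : V) : Prop :=
  γ₁ ∈ R.pos ∧ γ₂ ∈ R.pos ∧ ∃ η ∈ R.simple, R.coeff γ₁ η ≠ 0 ∧ R.coeff γ₂ η ≠ 0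

/-- total coefficient disagreement -/
def dis (γ₁ γ₂ : V) : ℕ :=
  ∑ α ∈ R.simple, ((R.coeff γ₁ α - R.coeff γ₂ α) + (R.coeff γ₂ α - R.coeff γ₁ α))

/-- the componentwise minimum is realized by a positive root -/
def MinProp (γ₁ γ₂ : V) : Prop :=
  ∃ μ ∈ R.pos, ∀ α ∈ R.simple,
    R.coeff μ α = R.coeff γ₁ α - (R.coeff γ₁ α - R.coeff γ₂ α)

lemma Hyp_symm {γ₁ γ₂ : V} (h : Hyp R γ₁ γ₂) : Hyp R γ₂ γ₁ := by
  obtain ⟨h1, h2, η, hη, hη1, hη2⟩ := h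
  exact ⟨h2, h1, η, hη, hη2, hη1⟩

lemma dis_symm (γ₁ γ₂ : V) : dis R γ₂ γ₁ = dis R γ₁ γ₂ :=
  Finset.sum_congr rfl fun α _ => Nat.add_comm _ _

lemma MinProp_symm {γ₁ γ₂ : V} (h : MinProp R γ₂ γ₁) : MinProp R γ₁ γ₂ := by
  obtain ⟨μ, hμ, hc⟩ := h
  exact ⟨μ, hμ, fun α hα => by have := hc α hα; omega⟩

lemma repr_add (f g : V → ℕ) :
    ∑ β ∈ R.simple, ((f β + g β : ℕ) : ℝ) • β
      = (∑ β ∈ R.simple, (f β : ℝ) • β) + ∑ β ∈ R.simple, (g β : ℝ) • β := by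
  rw [← Finset.sum_add_distrib]
  refine Finset.sum_congr rfl fun β _ => ?_
  push_cast
  rw [add_smul]

lemma repr_congr {f g : V → ℕ} (h : ∀ β ∈ R.simple, f β = g β) :
    ∑ β ∈ R.simple, (f β : ℝ) • β = ∑ β ∈ R.simple, (g β : ℝ) • β :=
  Finset.sum_congr rfl fun β hβ => by rw [h β hβ]

/-- one reduction step when `⟪γ₂, α⟫ > 0` for some coordinate where `γ₂` exceeds `γ₁` -/
lemma good_step {N : ℕ} {γ₁ γ₂ : V}
    (IH : ∀ p q : V, Hyp R p q → dis R p q < N → MinProp R p q)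
    (h : Hyp R γ₁ γ₂) (hN : dis R γ₁ γ₂ ≤ N) {α : V} (hα : α ∈ R.simple)
    (hlt : R.coeff γ₁ α < R.coeff γ₂ α) (hip : 0 < ⟪γ₂, α⟫) : MinProp R γ₁ γ₂ := by
  obtain ⟨h1, h2, η, hη, hη1, hη2⟩ := h
  have hαpos := R.simple_sub hα
  have hsimp := coeff_simple R hα
  -- γ₂ ≠ α
  have hne : γ₂ ≠ α := by
    intro hEq
    have hc2α : R.coeff γ₂ α = 1 := by
      rw [hEq, hsimp α hα]; simp
    have hc1α : R.coeff γ₁ α = 0 := by omega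
    have hηα : η = α := by
      by_contra hx
      refine hη2 ?_
      rw [hEq, hsimp η hη]
      simp [hx]
    rw [hηα] at hη1
    exact hη1 hc1α
  -- γ₂ - α is a positive root
  have hsub : γ₂ - α ∈ R.pos := by
    rcases sub_mem_of_inner_pos R h2 hαpos hne hip with hm | hm
    · exact hm
    · exfalso
      have h3 := coeff_add R hm h2 hαpos (by abel) α hα
      have h4 := coeff_add R hm h2 hαpos (by abel) η hη
      rw [hsimp α hα] at h3
      rw [hsimp η hη] at h4
      simp at h3
      by_cases hx : η = α
      · subst hx; omega
      · simp [hx] at h4; omega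
  set γ₂' := γ₂ - α with hγ₂'def
  have hadd : γ₂' + α = γ₂ := by rw [hγ₂'def]; abel
  have hc2' : ∀ β ∈ R.simple, R.coeff γ₂' β = R.coeff γ₂ β - (if β = α then 1 else 0) := by
    intro β hβ
    have h3 := coeff_add R hsub hαpos h2 hadd β hβ
    rw [hsimp β hβ] at h3
    omega
  have hc2'α : R.coeff γ₂' α = R.coeff γ₂ α - 1 := by
    have := hc2' α hα; simpa using this
  -- new hypotheses
  have hHyp' : Hyp R γ₁ γ₂' := by
    refine ⟨h1, hsub, η, hη, hη1, ?_⟩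
    by_cases hx : η = α
    · subst hx; omega
    · have := hc2' η hη; simp [hx] at this; omega
  -- disagreement decreases
  have hdis : dis R γ₁ γ₂' + 1 = dis R γ₁ γ₂ := by
    unfold dis
    rw [← Finset.add_sum_erase _ _ hα, ← Finset.add_sum_erase _ _ hα]
    have he : ∑ β ∈ R.simple.erase α,
        ((R.coeff γ₁ β - R.coeff γ₂' β) + (R.coeff γ₂' β - R.coeff γ₁ β))
        = ∑ β ∈ R.simple.erase α,
        ((R.coeff γ₁ β - R.coeff γ₂ β) + (R.coeff γ₂ β - R.coeff γ₁ β)) := by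
      refine Finset.sum_congr rfl fun β hβ => ?_
      have hβs := Finset.mem_of_mem_erase hβ
      have hβα : β ≠ α := Finset.ne_of_mem_erase hβ
      have := hc2' β hβs
      simp [hβα] at this
      omega
    rw [he]
    omega
  obtain ⟨μ, hμpos, hμ⟩ := IH γ₁ γ₂' hHyp' (by omega)
  refine ⟨μ, hμpos, fun β hβ => ?_⟩
  have h4 := hμ β hβ
  by_cases hx : β = α
  · subst hx; rw [h4, hc2'α]; omega
  · have := hc2' β hβ; simp [hx] at this; omega

end StmtAux

namespace StmtAux

variable {V : Type*} [NormedAddCommGroup V] [InnerProductSpace ℝ V] [DecidableEq V] (R : SimpleRS V)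

/-- reduction in the "bad" case: the excess of `γ₂` over `γ₁` has height ≥ 2 -/
lemma bad_step {N : ℕ} {γ₁ γ₂ : V}
    (IH : ∀ p q : V, Hyp R p q → dis R p q < N → MinProp R p q)
    (h : Hyp R γ₁ γ₂) (hN : dis R γ₁ γ₂ ≤ N)
    (hi : ∀ α ∈ R.simple, R.coeff γ₁ α < R.coeff γ₂ α → ⟪γ₂, α⟫ ≤ 0)
    (hv2 : 2 ≤ ∑ α ∈ R.simple, (R.coeff γ₂ α - R.coeff γ₁ α)) :
    MinProp R γ₁ γ₂ := by
  obtain ⟨h1, h2, η, hη, hη1, hη2⟩ := h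
  set v : V := ∑ β ∈ R.simple, ((R.coeff γ₂ β - R.coeff γ₁ β : ℕ) : ℝ) • β with hv
  set w : V := ∑ β ∈ R.simple, ((R.coeff γ₁ β - R.coeff γ₂ β : ℕ) : ℝ) • β with hw
  set m : V := ∑ β ∈ R.simple, ((R.coeff γ₁ β - (R.coeff γ₁ β - R.coeff γ₂ β) : ℕ) : ℝ) • β with hm
  have hγ₂mv : γ₂ = m + v := by
    rw [hm, hv, ← repr_add R]
    conv_lhs => rw [R.coeff_spec γ₂ h2]
    exact repr_congr R fun β _ => by omega
  have hγ₁mw : γ₁ = m + w := by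
    rw [hm, hw, ← repr_add R]
    conv_lhs => rw [R.coeff_spec γ₁ h1]
    exact repr_congr R fun β _ => by omega
  have hxv : ∀ x : V, ⟪x, v⟫
      = ∑ β ∈ R.simple, ((R.coeff γ₂ β - R.coeff γ₁ β : ℕ) : ℝ) * ⟪x, β⟫ := by
    intro x
    rw [hv, inner_sum]
    exact Finset.sum_congr rfl fun β _ => real_inner_smul_right _ _ _
  have hγ₂v : ⟪γ₂, v⟫ ≤ 0 := by
    rw [hxv γ₂]
    apply Finset.sum_nonpos
    intro β hβ
    rcases Nat.eq_zero_or_pos (R.coeff γ₂ β - R.coeff γ₁ β) with h0 | hpos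
    · rw [h0]; simp
    · exact mul_nonpos_of_nonneg_of_nonpos (Nat.cast_nonneg _) (hi β hβ (by omega))
  obtain ⟨β₀, hβ₀, hfv₀⟩ : ∃ β ∈ R.simple, R.coeff γ₂ β - R.coeff γ₁ β ≠ 0 := by
    by_contra hcon
    push_neg at hcon
    rw [Finset.sum_eq_zero hcon] at hv2
    omega
  have hvne : v ≠ 0 := by
    intro h0
    have := sum_eq R (f := fun β => ((R.coeff γ₂ β - R.coeff γ₁ β : ℕ) : ℝ))
      (g := fun _ => 0) (by rw [← hv, h0]; simp) β₀ hβ₀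
    exact hfv₀ (by exact_mod_cast this)
  have hvv : 0 < ⟪v, v⟫ := by
    rw [real_inner_self_eq_norm_mul_norm]
    have := norm_pos_iff.mpr hvne
    positivity
  have hmv : ⟪m, v⟫ ≤ -⟪v, v⟫ := by
    have hmeq : m = γ₂ - v := by rw [hγ₂mv]; abel
    rw [hmeq, inner_sub_left]
    linarith
  have hwv : ⟪w, v⟫ ≤ 0 := by
    rw [hxv w]
    apply Finset.sum_nonpos
    intro β hβ
    rcases Nat.eq_zero_or_pos (R.coeff γ₂ β - R.coeff γ₁ β) with h0 | hposβ
    · rw [h0]; simp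
    apply mul_nonpos_of_nonneg_of_nonpos (Nat.cast_nonneg _)
    rw [hw, sum_inner]
    apply Finset.sum_nonpos
    intro δ hδ
    rw [real_inner_smul_left]
    rcases Nat.eq_zero_or_pos (R.coeff γ₁ δ - R.coeff γ₂ δ) with h0' | hposδ
    · rw [h0']; simp
    apply mul_nonpos_of_nonneg_of_nonpos (Nat.cast_nonneg _)
    exact inner_simple_nonpos R hδ hβ (by intro hEq; rw [hEq] at hposδ; omega)
  have hγ₁v : ⟪γ₁, v⟫ < 0 := by
    rw [hγ₁mw, inner_add_left]
    linarith
  have hsumlt : ∑ β ∈ R.simple, ((R.coeff γ₂ β - R.coeff γ₁ β : ℕ) : ℝ) * ⟪γ₁, β⟫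
      < ∑ _β ∈ R.simple, (0:ℝ) := by
    rw [← hxv γ₁]
    simpa using hγ₁v
  obtain ⟨α, hα, hterm⟩ := Finset.exists_lt_of_sum_lt hsumlt
  have hγ₁α : ⟪γ₁, α⟫ < 0 := by
    by_contra hcon
    push_neg at hcon
    have : (0:ℝ) ≤ ((R.coeff γ₂ α - R.coeff γ₁ α : ℕ) : ℝ) * ⟪γ₁, α⟫ :=
      mul_nonneg (Nat.cast_nonneg _) hcon
    linarith
  have hfvα : R.coeff γ₁ α < R.coeff γ₂ α := by
    by_contra hcon
    push_neg at hcon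
    have h0 : R.coeff γ₂ α - R.coeff γ₁ α = 0 := by omega
    rw [h0] at hterm
    simp at hterm
  have hαpos := R.simple_sub hα
  have hsimp := coeff_simple R hα
  have hζ : γ₁ + α ∈ R.pos := add_mem_of_inner_neg R h1 hαpos hγ₁α
  have hcζ : ∀ β ∈ R.simple,
      R.coeff (γ₁ + α) β = R.coeff γ₁ β + (if β = α then 1 else 0) := by
    intro β hβ
    have := coeff_add R h1 hαpos hζ rfl β hβ
    rw [hsimp β hβ] at this
    omega
  have hHyp' : Hyp R (γ₁ + α) γ₂ := by
    refine ⟨hζ, h2, η, hη, ?_, hη2⟩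
    have := hcζ η hη
    by_cases hx : η = α
    · subst hx; simp at this; omega
    · simp [hx] at this; omega
  have hdis1 : dis R (γ₁ + α) γ₂ + 1 = dis R γ₁ γ₂ := by
    unfold dis
    rw [← Finset.add_sum_erase _ _ hα, ← Finset.add_sum_erase _ _ hα]
    have he : ∑ β ∈ R.simple.erase α,
        ((R.coeff (γ₁ + α) β - R.coeff γ₂ β) + (R.coeff γ₂ β - R.coeff (γ₁ + α) β))
        = ∑ β ∈ R.simple.erase α,
        ((R.coeff γ₁ β - R.coeff γ₂ β) + (R.coeff γ₂ β - R.coeff γ₁ β)) := by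
      refine Finset.sum_congr rfl fun β hβ => ?_
      have hβα : β ≠ α := Finset.ne_of_mem_erase hβ
      have := hcζ β (Finset.mem_of_mem_erase hβ)
      simp [hβα] at this
      omega
    rw [he]
    have := hcζ α hα
    simp at this
    omega
  obtain ⟨μ₁, hμ₁pos, hμ₁⟩ := IH (γ₁ + α) γ₂ hHyp' (by omega)
  have hμ₁c : ∀ β ∈ R.simple, R.coeff μ₁ β
      = (R.coeff γ₁ β - (R.coeff γ₁ β - R.coeff γ₂ β)) + (if β = α then 1 else 0) := by
    intro β hβ
    have e1 := hμ₁ β hβ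
    have e2 := hcζ β hβ
    by_cases hx : β = α
    · subst hx; simp at e2 ⊢; omega
    · simp [hx] at e2 ⊢; omega
  have hHyp'' : Hyp R γ₁ μ₁ := by
    refine ⟨h1, hμ₁pos, η, hη, hη1, ?_⟩
    have := hμ₁c η hη
    by_cases hx : η = α
    · subst hx; simp at this; omega
    · simp [hx] at this; omega
  have hdis2 : dis R γ₁ μ₁ < dis R γ₁ γ₂ := by
    unfold dis
    apply Finset.sum_lt_sum
    · intro β hβ
      have := hμ₁c β hβ
      by_cases hx : β = α
      · subst hx; simp at this; omega
      · simp [hx] at this; omega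
    · by_cases hfv2 : 2 ≤ R.coeff γ₂ α - R.coeff γ₁ α
      · refine ⟨α, hα, ?_⟩
        have := hμ₁c α hα
        simp at this
        omega
      · obtain ⟨β₁, hβ₁s, hβ₁α, hfvβ₁⟩ :
            ∃ β ∈ R.simple, β ≠ α ∧ R.coeff γ₂ β - R.coeff γ₁ β ≠ 0 := by
          by_contra hcon
          push_neg at hcon
          have hs : ∑ β ∈ R.simple, (R.coeff γ₂ β - R.coeff γ₁ β)
              = R.coeff γ₂ α - R.coeff γ₁ α :=
            Finset.sum_eq_single_of_mem α hα (fun b hb hbne => hcon b hb hbne)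
          omega
        refine ⟨β₁, hβ₁s, ?_⟩
        have := hμ₁c β₁ hβ₁s
        simp [hβ₁α] at this
        omega
  obtain ⟨μ, hμpos, hμ⟩ := IH γ₁ μ₁ hHyp'' (by omega)
  refine ⟨μ, hμpos, fun β hβ => ?_⟩
  have e1 := hμ β hβ
  have e2 := hμ₁c β hβ
  by_cases hx : β = α
  · subst hx; simp at e2; omega
  · simp [hx] at e2; omega

end StmtAux

namespace StmtAux

variable {V : Type*} [NormedAddCommGroup V] [InnerProductSpace ℝ V] [DecidableEq V] (R : SimpleRS V)

lemma simple_repr {α : V} (hα : α ∈ R.simple) :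
    α = ∑ β ∈ R.simple, (((if β = α then 1 else 0 : ℕ)) : ℝ) • β := by
  have : ∑ β ∈ R.simple, (((if β = α then 1 else 0 : ℕ)) : ℝ) • β = α := by
    simp only [Nat.cast_ite, Nat.cast_one, Nat.cast_zero, ite_smul, one_smul, zero_smul]
    rw [Finset.sum_ite_eq' R.simple α (fun β => β)]
    simp [hα]
  exact this.symm

lemma unique_excess {γ₁ γ₂ : V} {α₀ : V} (hα₀ : α₀ ∈ R.simple)
    (hlt : R.coeff γ₁ α₀ < R.coeff γ₂ α₀)
    (hsum : ∑ α ∈ R.simple, (R.coeff γ₂ α - R.coeff γ₁ α) ≤ 1) :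
    ∀ η ∈ R.simple, (η = α₀ → R.coeff γ₂ η = R.coeff γ₁ η + 1) ∧
      (η ≠ α₀ → R.coeff γ₂ η ≤ R.coeff γ₁ η) := by
  intro η hη
  constructor
  · intro hx
    subst hx
    have hle : R.coeff γ₂ η - R.coeff γ₁ η
        ≤ ∑ α ∈ R.simple, (R.coeff γ₂ α - R.coeff γ₁ α) :=
      Finset.single_le_sum (f := fun a => R.coeff γ₂ a - R.coeff γ₁ a)
        (fun a _ => Nat.zero_le _) hη
    omega
  · intro hxne
    have hne' : α₀ ≠ η := fun hEq => hxne hEq.symm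
    have hsub : ({α₀, η} : Finset V) ⊆ R.simple := by
      intro x hx
      simp only [Finset.mem_insert, Finset.mem_singleton] at hx
      rcases hx with h | h
      · subst h; exact hα₀
      · subst h; exact hη
    have hps := Finset.sum_le_sum_of_subset
      (f := fun a => R.coeff γ₂ a - R.coeff γ₁ a) hsub
    rw [Finset.sum_pair hne'] at hps
    have hpair : (R.coeff γ₂ α₀ - R.coeff γ₁ α₀) + (R.coeff γ₂ η - R.coeff γ₁ η)
        ≤ ∑ a ∈ R.simple, (R.coeff γ₂ a - R.coeff γ₁ a) := by simpa using hps
    omega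

/-- the contradictory "core" configuration: `γ₂ = m + α`, `γ₁ = m + β` with
`⟪γ₂, α⟫ ≤ 0` and `⟪γ₁, β⟫ ≤ 0` is impossible -/
lemma core {γ₁ γ₂ α β : V}
    (h1 : γ₁ ∈ R.pos) (h2 : γ₂ ∈ R.pos) (hα : α ∈ R.simple) (hβ : β ∈ R.simple)
    (hne : α ≠ β)
    (hc2 : ∀ η ∈ R.simple, (η = α → R.coeff γ₂ η = R.coeff γ₁ η + 1) ∧
      (η ≠ α → R.coeff γ₂ η ≤ R.coeff γ₁ η))
    (hc1 : ∀ η ∈ R.simple, (η = β → R.coeff γ₁ η = R.coeff γ₂ η + 1) ∧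
      (η ≠ β → R.coeff γ₁ η ≤ R.coeff γ₂ η))
    (hiα : ⟪γ₂, α⟫ ≤ 0) (hiβ : ⟪γ₁, β⟫ ≤ 0) : False := by
  have hαp := R.simple_sub hα
  have hβp := R.simple_sub hβ
  -- γ₁ + α = γ₂ + β
  have hδ : γ₁ + α = γ₂ + β := by
    have e1 : γ₁ + α
        = ∑ η ∈ R.simple, ((R.coeff γ₁ η + (if η = α then 1 else 0) : ℕ) : ℝ) • η := by
      rw [repr_add R]
      congr 1
      · exact R.coeff_spec γ₁ h1
      · exact simple_repr R hα
    have e2 : γ₂ + β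
        = ∑ η ∈ R.simple, ((R.coeff γ₂ η + (if η = β then 1 else 0) : ℕ) : ℝ) • η := by
      rw [repr_add R]
      congr 1
      · exact R.coeff_spec γ₂ h2
      · exact simple_repr R hβ
    rw [e1, e2]
    refine repr_congr R fun η hη => ?_
    obtain ⟨ha2, hb2⟩ := hc2 η hη
    obtain ⟨ha1, hb1⟩ := hc1 η hη
    by_cases hx : η = α <;> by_cases hy : η = β
    · exact absurd (hx.symm.trans hy) hne
    · have e1 := ha2 hx
      have e2 := hb1 hy
      rw [if_pos hx, if_neg hy]
      omega
    · have e1 := ha1 hy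
      have e2 := hb2 hx
      rw [if_neg hx, if_pos hy]
      omega
    · have e1 := hb2 hx
      have e2 := hb1 hy
      rw [if_neg hx, if_neg hy]
      omega
  have hβα : ⟪β, α⟫ ≤ 0 := inner_simple_nonpos R hβ hα (Ne.symm hne)
  have hγ₁eq : γ₁ = γ₂ + β - α := eq_sub_of_add_eq hδ
  have hγ₂eq : γ₂ = γ₁ + α - β := eq_sub_of_add_eq hδ.symm
  have hna : 0 < ⟪α, α⟫ := inner_self_pos' R hαp
  have hb : 0 < ⟪γ₁, γ₁⟫ := inner_self_pos' R h1
  have hγ₁α : ⟪γ₁, α⟫ ≤ -⟪α, α⟫ := by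
    have : ⟪γ₁, α⟫ = ⟪γ₂, α⟫ + ⟪β, α⟫ - ⟪α, α⟫ := by
      conv_lhs => rw [hγ₁eq]
      rw [inner_sub_left, inner_add_left]
    rw [this]
    linarith
  -- ⟪γ₁, γ₂⟫ ≤ 0
  have hne12 : γ₁ ≠ γ₂ := by
    intro hEq
    have e2 := (hc2 α hα).1 rfl
    rw [hEq] at e2
    omega
  have hip : ⟪γ₁, γ₂⟫ ≤ 0 := by
    by_contra hcon
    push_neg at hcon
    rcases sub_mem_of_inner_pos R h1 h2 hne12 hcon with hm | hm
    · have e := coeff_add R hm h2 h1 (by abel) α hα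
      have e2 := (hc2 α hα).1 rfl
      omega
    · have e := coeff_add R hm h1 h2 (by abel) β hβ
      have e1 := (hc1 β hβ).1 rfl
      omega
  have hγ₁α2 : ⟪γ₁, α⟫ ≤ -⟪γ₁, γ₁⟫ := by
    have : ⟪γ₁, γ₂⟫ = ⟪γ₁, γ₁⟫ + ⟪γ₁, α⟫ - ⟪γ₁, β⟫ := by
      conv_lhs => rw [hγ₂eq]
      rw [inner_sub_right, inner_add_right]
    linarith
  -- Cauchy–Schwarz contradiction
  have hCS : |⟪γ₁, α⟫| ≤ ‖γ₁‖ * ‖α‖ := abs_real_inner_le_norm γ₁ α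
  have h2b : ⟪γ₁, γ₁⟫ = ‖γ₁‖ * ‖γ₁‖ := real_inner_self_eq_norm_mul_norm γ₁
  have h2a : ⟪α, α⟫ = ‖α‖ * ‖α‖ := real_inner_self_eq_norm_mul_norm α
  have htneg : ⟪γ₁, α⟫ < 0 := by linarith
  have habs : |⟪γ₁, α⟫| = -⟪γ₁, α⟫ := abs_of_neg htneg
  have hup : -⟪γ₁, α⟫ ≤ ‖γ₁‖ * ‖α‖ := by rw [← habs]; exact hCS
  have hdown : ‖γ₁‖ * ‖α‖ ≤ -⟪γ₁, α⟫ := by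
    nlinarith [sq_nonneg (‖γ₁‖ - ‖α‖), norm_nonneg γ₁, norm_nonneg α]
  have heqt : ⟪γ₁, -α⟫ = ‖γ₁‖ * ‖(-α : V)‖ := by
    rw [inner_neg_right, norm_neg]
    linarith
  have hprop := inner_eq_norm_mul_iff_real.mp heqt
  rw [norm_neg] at hprop
  -- γ₁ is a negative multiple of α : contradiction with coefficients
  have hα0 : ‖α‖ ≠ 0 := by
    have := R.root_ne α hαp
    simpa [norm_eq_zero] using this
  have hγr : γ₁ = (‖α‖⁻¹ * ‖γ₁‖) • (-α : V) := by
    have hc := congrArg (fun x : V => (‖α‖)⁻¹ • x) hprop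
    simp only [smul_smul] at hc
    rw [inv_mul_cancel₀ hα0, one_smul] at hc
    exact hc
  have hsmul : ∀ r : ℝ, r • α = ∑ η ∈ R.simple,
      (r * ((if η = α then 1 else 0 : ℕ) : ℝ)) • η := by
    intro r
    conv_lhs => rw [simple_repr R hα]
    rw [Finset.smul_sum]
    exact Finset.sum_congr rfl fun η _ => by rw [smul_smul]
  have hrep : γ₁ = ∑ η ∈ R.simple,
      ((-(‖α‖⁻¹ * ‖γ₁‖)) * ((if η = α then 1 else 0 : ℕ) : ℝ)) • η := by
    calc γ₁ = (‖α‖⁻¹ * ‖γ₁‖) • (-α : V) := hγr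
    _ = (-(‖α‖⁻¹ * ‖γ₁‖)) • α := by rw [smul_neg, ← neg_smul]
    _ = ∑ η ∈ R.simple, ((-(‖α‖⁻¹ * ‖γ₁‖)) * ((if η = α then 1 else 0 : ℕ) : ℝ)) • η :=
      hsmul _
  have hcoef := sum_eq R (f := fun η => (R.coeff γ₁ η : ℝ))
    (g := fun η => (-(‖α‖⁻¹ * ‖γ₁‖)) * ((if η = α then 1 else 0 : ℕ) : ℝ))
    (by rw [← R.coeff_spec γ₁ h1, ← hrep]) β hβ
  simp only [Ne.symm hne, if_false, Nat.cast_zero, mul_zero] at hcoef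
  have e1 := (hc1 β hβ).1 rfl
  have : R.coeff γ₁ β = 0 := by exact_mod_cast hcoef
  omega

end StmtAux

namespace StmtAux

variable {V : Type*} [NormedAddCommGroup V] [InnerProductSpace ℝ V] [DecidableEq V] (R : SimpleRS V)

/-- main lemma: the componentwise minimum of two positive roots with
intersecting supports is again a positive root -/
lemma min_exists : ∀ N : ℕ, ∀ γ₁ γ₂ : V, Hyp R γ₁ γ₂ → dis R γ₁ γ₂ ≤ N →
    MinProp R γ₁ γ₂ := by
  intro N
  induction N using Nat.strong_induction_on with
  | _ N IH =>
  intro γ₁ γ₂ h hd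
  have IH' : ∀ p q : V, Hyp R p q → dis R p q < N → MinProp R p q := fun p q hpq hlt =>
    IH (dis R p q) hlt p q hpq le_rfl
  obtain ⟨h1, h2, η, hη, hη1, hη2⟩ := h
  by_cases h12 : ∀ α ∈ R.simple, R.coeff γ₁ α ≤ R.coeff γ₂ α
  · exact ⟨γ₁, h1, fun α hα => by have := h12 α hα; omega⟩
  by_cases h21 : ∀ α ∈ R.simple, R.coeff γ₂ α ≤ R.coeff γ₁ α
  · exact ⟨γ₂, h2, fun α hα => by have := h21 α hα; omega⟩
  push_neg at h12 h21
  obtain ⟨β₀, hβ₀, hβ₀lt⟩ := h12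
  obtain ⟨α₀, hα₀, hα₀lt⟩ := h21
  by_cases hg2 : ∃ α ∈ R.simple, R.coeff γ₁ α < R.coeff γ₂ α ∧ 0 < ⟪γ₂, α⟫
  · obtain ⟨α, hα, hlt, hip⟩ := hg2
    exact good_step R IH' ⟨h1, h2, η, hη, hη1, hη2⟩ hd hα hlt hip
  by_cases hg1 : ∃ α ∈ R.simple, R.coeff γ₂ α < R.coeff γ₁ α ∧ 0 < ⟪γ₁, α⟫
  · obtain ⟨α, hα, hlt, hip⟩ := hg1
    apply MinProp_symm R
    refine good_step R IH' (Hyp_symm R ⟨h1, h2, η, hη, hη1, hη2⟩) ?_ hα hlt hip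
    rw [dis_symm]
    exact hd
  push_neg at hg2 hg1
  by_cases hv2 : 2 ≤ ∑ α ∈ R.simple, (R.coeff γ₂ α - R.coeff γ₁ α)
  · exact bad_step R IH' ⟨h1, h2, η, hη, hη1, hη2⟩ hd hg2 hv2
  by_cases hw2 : 2 ≤ ∑ α ∈ R.simple, (R.coeff γ₁ α - R.coeff γ₂ α)
  · apply MinProp_symm R
    refine bad_step R IH' (Hyp_symm R ⟨h1, h2, η, hη, hη1, hη2⟩) ?_ hg1 hw2
    rw [dis_symm]
    exact hd
  -- the core case : single excess on both sides, no good direction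
  exfalso
  push_neg at hv2 hw2
  have hu2 := unique_excess R hα₀ hα₀lt (by omega)
  have hu1 := unique_excess R (γ₁ := γ₂) (γ₂ := γ₁) hβ₀ hβ₀lt (by omega)
  have hαβ : α₀ ≠ β₀ := by
    intro hEq
    rw [hEq] at hα₀lt
    omega
  exact core R h1 h2 hα₀ hβ₀ hαβ hu2 hu1 (hg2 α₀ hα₀ hα₀lt) (hg1 β₀ hβ₀ hβ₀lt)

lemma rle_iff {μ ν : V} (hμ : μ ∈ R.pos) (hν : ν ∈ R.pos) :
    R.rle μ ν ↔ ∀ α ∈ R.simple, R.coeff μ α ≤ R.coeff ν α := by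
  constructor
  · rintro ⟨c, hc⟩ α hα
    have hadd : ∑ β ∈ R.simple, ((R.coeff μ β + c β : ℕ) : ℝ) • β
        = ∑ β ∈ R.simple, (R.coeff ν β : ℝ) • β := by
      rw [repr_add R, ← R.coeff_spec μ hμ, ← R.coeff_spec ν hν]
      rw [← hc]
      abel
    have h3 := sum_eq R hadd α hα
    have : R.coeff μ α + c α = R.coeff ν α := by exact_mod_cast h3
    omega
  · intro hle
    refine ⟨fun α => R.coeff ν α - R.coeff μ α, ?_⟩
    conv_lhs => rw [R.coeff_spec ν hν, R.coeff_spec μ hμ]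
    rw [← Finset.sum_sub_distrib]
    refine Finset.sum_congr rfl fun β hβ => ?_
    rw [← sub_smul]
    congr 1
    rw [Nat.cast_sub (hle β hβ)]

end StmtAux

/-- the greatest lower bound of `γ₁, γ₂` exists in `(Δ⁺, ≼)` iff
their supports intersect. -/
theorem stmt2 {V : Type*} [NormedAddCommGroup V] [InnerProductSpace ℝ V]
    (R : SimpleRS V) {γ₁ γ₂ : V} (h1 : γ₁ ∈ R.pos) (h2 : γ₂ ∈ R.pos) :
    (∃ ν ∈ R.pos, R.rle ν γ₁ ∧ R.rle ν γ₂ ∧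
        ∀ κ ∈ R.pos, R.rle κ γ₁ → R.rle κ γ₂ → R.rle κ ν) ↔
      (R.supp γ₁ ∩ R.supp γ₂).Nonempty := by
  classical
  constructor
  · rintro ⟨ν, hν, hν1, hν2, -⟩
    obtain ⟨α, hα, hαne⟩ := StmtAux.exists_supp R hν
    have e1 := (StmtAux.rle_iff R hν h1).mp hν1 α hα
    have e2 := (StmtAux.rle_iff R hν h2).mp hν2 α hα
    exact ⟨α, ⟨⟨hα, by omega⟩, ⟨hα, by omega⟩⟩⟩
  · rintro ⟨α, hmem⟩
    have hs1 : α ∈ R.simple ∧ R.coeff γ₁ α ≠ 0 := hmem.1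
    have hs2 : α ∈ R.simple ∧ R.coeff γ₂ α ≠ 0 := hmem.2
    obtain ⟨μ, hμ, hμc⟩ := StmtAux.min_exists R (StmtAux.dis R γ₁ γ₂) γ₁ γ₂
      ⟨h1, h2, α, hs1.1, hs1.2, hs2.2⟩ le_rfl
    refine ⟨μ, hμ, ?_, ?_, ?_⟩
    · exact (StmtAux.rle_iff R hμ h1).mpr fun β hβ => by have := hμc β hβ; omega
    · exact (StmtAux.rle_iff R hμ h2).mpr fun β hβ => by have := hμc β hβ; omega
    · intro κ hκ hκ1 hκ2
      refine (StmtAux.rle_iff R hκ hμ).mpr fun β hβ => ?_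
      have e1 := (StmtAux.rle_iff R hκ h1).mp hκ1 β hβ
      have e2 := (StmtAux.rle_iff R hκ h2).mp hκ2 β hβ
      have := hμc β hβ
      omega
end
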